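/- Let f be a polymorphism of (1in3, T1) of arity n such that f(∅) = 0 and f has no 2-set of size 2 (i.e., f(X) ≠ 2 for every X ⊆ [n] with |X| = 2). If X ⊆ [n] is a 1-set (f(X) = 1) and E(f) \ X is nonempty, then X ∪ I(f) is a 1-set, i.e., f(X ∪ I(f)) = 1. -/

import Mathlib

/-- `f` is a polymorphism of `(1in3, B)` where `B` has relation `R`:
for every partition of `[n]` into three pairwise disjoint blocks `X, Y, Z`,
the triple of values is in `R`. -/
def IsPolymorphism {n : ℕ} {B : Type*} (R : B → B → B → Prop) (f : Finset (Fin n) → B) : Prop :=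
  ∀ X Y Z : Finset (Fin n), Disjoint X Y → Disjoint X Z → Disjoint Y Z →
    X ∪ Y ∪ Z = Finset.univ → R (f X) (f Y) (f Z)

/-- The relation of `relT1`: all coordinate permutations of (0,0,1), (0,0,2), (1,1,2). -/
def relT1 (a b c : ℕ) : Prop :=
  ({a, b, c} : Multiset ℕ) = {0, 0, 1} ∨ ({a, b, c} : Multiset ℕ) = {0, 0, 2} ∨
    ({a, b, c} : Multiset ℕ) = {1, 1, 2}


/-- `E(f)`: the set of coordinates `x` whose singleton is a 1-set or a 2-set. -/
def Eset {n : ℕ} (f : Finset (Fin n) → ℕ) : Finset (Fin n) :=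
  Finset.univ.filter (fun x => f {x} = 1 ∨ f {x} = 2)

lemma relT1_cases {a b c : ℕ} (h : relT1 a b c) :
    (a=0∧b=0∧c=1)∨(a=0∧b=1∧c=0)∨(a=1∧b=0∧c=0)∨
    (a=0∧b=0∧c=2)∨(a=0∧b=2∧c=0)∨(a=2∧b=0∧c=0)∨
    (a=1∧b=1∧c=2)∨(a=1∧b=2∧c=1)∨(a=2∧b=1∧c=1) := by
  have ha : a ≤ 2 := by
    have hm : a ∈ ({a,b,c} : Multiset ℕ) := by simp
    rcases h with h|h|h <;> rw [h] at hm <;> simp at hm <;> omega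
  have hb : b ≤ 2 := by
    have hm : b ∈ ({a,b,c} : Multiset ℕ) := by simp
    rcases h with h|h|h <;> rw [h] at hm <;> simp at hm <;> omega
  have hc : c ≤ 2 := by
    have hm : c ∈ ({a,b,c} : Multiset ℕ) := by simp
    rcases h with h|h|h <;> rw [h] at hm <;> simp at hm <;> omega
  interval_cases a <;> interval_cases b <;> interval_cases c <;> (unfold relT1 at h; revert h; decide)

lemma poly2 {n : ℕ} {f : Finset (Fin n) → ℕ} (hf : IsPolymorphism relT1 f)
    (A : Finset (Fin n)) : relT1 (f A) (f Aᶜ) (f ∅) :=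
  hf A Aᶜ ∅ disjoint_compl_right (Finset.disjoint_empty_right _)
    (Finset.disjoint_empty_right _) (by simp)

lemma poly3 {n : ℕ} {f : Finset (Fin n) → ℕ} (hf : IsPolymorphism relT1 f)
    {A B : Finset (Fin n)} (hAB : Disjoint A B) :
    relT1 (f A) (f B) (f (A ∪ B)ᶜ) := by
  apply hf
  · exact hAB
  · exact disjoint_compl_right.mono_left Finset.subset_union_left
  · exact disjoint_compl_right.mono_left Finset.subset_union_right
  · exact Finset.union_compl (A ∪ B)

lemma step {n : ℕ} {f : Finset (Fin n) → ℕ} (hf : IsPolymorphism relT1 f)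
    (h0 : f ∅ = 0) (h2 : ∀ X : Finset (Fin n), X.card = 2 → f X ≠ 2)
    {S : Finset (Fin n)} {x e : Fin n}
    (hS : f S = 1) (hx : f {x} = 0) (hxS : x ∉ S)
    (he : f {e} = 1 ∨ f {e} = 2) (heS : e ∉ S) (hex : e ≠ x) :
    f (S ∪ {x}) = 1 := by
  have hdSx : Disjoint S ({x} : Finset (Fin n)) := by
    simp [Finset.disjoint_singleton_right, hxS]
  have t1 := poly3 hf hdSx
  rw [hS, hx] at t1
  have hc0 : f (S ∪ {x})ᶜ = 0 := by have := relT1_cases t1; omega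
  have t2 := poly2 hf (S ∪ {x})
  rw [h0, hc0] at t2
  have h12 : f (S ∪ {x}) = 1 ∨ f (S ∪ {x}) = 2 := by have := relT1_cases t2; omega
  rcases h12 with h1 | hsx2
  · exact h1
  exfalso
  have hde : Disjoint (S ∪ {x}) ({e} : Finset (Fin n)) := by
    simp [Finset.disjoint_singleton_right, heS, hex]
  have t3 := poly3 hf hde
  rw [hsx2] at t3
  rcases he with he1 | he2
  · have hdxe : Disjoint ({x} : Finset (Fin n)) {e} := by
      simp [Finset.disjoint_singleton_right, hex, Ne.symm hex]
    have t4 := poly3 hf hdxe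
    rw [hx, he1] at t4
    have hxe0 : f ({x} ∪ {e})ᶜ = 0 := by have := relT1_cases t4; omega
    have t5 := poly2 hf ({x} ∪ {e})
    rw [h0, hxe0] at t5
    have hxe1 : f ({x} ∪ {e}) = 1 := by
      have hcard : ({x} ∪ {e} : Finset (Fin n)).card = 2 := by
        rw [Finset.card_union_of_disjoint hdxe]; rfl
      have h2' := h2 ({x} ∪ {e}) hcard
      have := relT1_cases t5; omega
    have hdS : Disjoint S ({x} ∪ {e} : Finset (Fin n)) := by
      simp [Finset.disjoint_union_right, Finset.disjoint_singleton_right, hxS, heS]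
    have t6 := poly3 hf hdS
    rw [hS, hxe1] at t6
    have hrest : f (S ∪ ({x} ∪ {e}))ᶜ = 2 := by have := relT1_cases t6; omega
    have hsets : (S ∪ {x}) ∪ {e} = S ∪ ({x} ∪ {e}) := Finset.union_assoc S {x} {e}
    rw [he1, hsets, hrest] at t3
    have := relT1_cases t3; omega
  · rw [he2] at t3
    have := relT1_cases t3; omega

theorem stmt_10 (n : ℕ) (hn : 1 ≤ n) (f : Finset (Fin n) → ℕ) (hf : IsPolymorphism relT1 f)
    (h0 : f ∅ = 0) (h2 : ∀ X : Finset (Fin n), X.card = 2 → f X ≠ 2)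
    (X : Finset (Fin n)) (hX : f X = 1) (hne : (Eset f \ X).Nonempty) :
    f (X ∪ (Eset f)ᶜ) = 1 := by
  obtain ⟨e, he⟩ := hne
  have heE : e ∈ Eset f := (Finset.mem_sdiff.mp he).1
  have heX : e ∉ X := (Finset.mem_sdiff.mp he).2
  have he12 : f {e} = 1 ∨ f {e} = 2 := by
    simpa [Eset] using heE
  have key : ∀ T : Finset (Fin n), T ⊆ (Eset f)ᶜ → f (X ∪ T) = 1 := by
    intro T
    induction T using Finset.induction_on with
    | empty => intro _; simpa using hX
    | @insert a T haT ih =>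
      intro hsub
      have hTsub : T ⊆ (Eset f)ᶜ := fun y hy => hsub (Finset.mem_insert_of_mem hy)
      have ha : a ∈ (Eset f)ᶜ := hsub (Finset.mem_insert_self a T)
      have hIH := ih hTsub
      by_cases haX : a ∈ X ∪ T
      · rw [Finset.union_insert, Finset.insert_eq_self.mpr haX]
        exact hIH
      · have hanot : ¬ (f {a} = 1 ∨ f {a} = 2) := by
          have := Finset.mem_compl.mp ha
          simpa [Eset] using this
        have ha0 : f {a} = 0 := by
          have t := poly2 hf {a}
          rw [h0] at t
          have := relT1_cases t; omega
        have heT : e ∉ T := fun h => by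
          have := Finset.mem_compl.mp (hTsub h)
          simp [Eset] at this
          omega
        have hea : e ≠ a := by
          rintro rfl
          exact hanot he12
        have heXT : e ∉ X ∪ T := by simp [heX, heT]
        have hst := step hf h0 h2 hIH ha0 haX he12 heXT hea
        have hs : X ∪ insert a T = (X ∪ T) ∪ {a} := by
          ext y
          simp [Finset.mem_insert, Finset.mem_union, or_comm, or_assoc, or_left_comm]
        rw [hs]
        exact hst
  exact key _ (le_refl _)
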